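/- Let P(t) = ∑ γ_n t^n be holomorphic on the open unit disc and extend meromorphically to a neighbourhood of the closed unit disc, with all poles on the unit circle. Suppose P is tame and simply accumulating with Ω(P) = {1/(1−s)} (i.e. γ_{n−1}/γ_n → 1). Then among the poles of P on the unit circle of maximal order d_m, the only one is at t = 1; that is, the top denominator polynomial Δ_P^{top}(t) equals t − 1. -/

import Mathlib

open Filter

private lemma exp_sum_coeffs_eq_zero {ι : Type*} [DecidableEq ι] (lam : ι → ℂ) (s : Finset ι) :
    ∀ c : ι → ℂ, (∀ i ∈ s, ‖lam i‖ = 1) →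
      (∀ i ∈ s, ∀ j ∈ s, lam i = lam j → i = j) →
      Tendsto (fun n => ∑ i ∈ s, c i * lam i ^ n) atTop (nhds 0) →
      ∀ i ∈ s, c i = 0 := by
  induction s using Finset.induction_on with
  | empty => intro c _ _ _ i hi; exact absurd hi (Finset.notMem_empty i)
  | @insert a s ha ih =>
    intro c hnorm hdist h
    have hS1 : Tendsto (fun n => ∑ i ∈ insert a s, c i * lam i ^ (n + 1)) atTop (nhds 0) := by
      have := h.comp (tendsto_add_atTop_nat 1)
      exact this
    have hT : Tendsto (fun n => ∑ i ∈ s, (c i * (lam i - lam a)) * lam i ^ n) atTop (nhds 0) := by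
      have h2 := hS1.sub (h.const_mul (lam a))
      rw [mul_zero, sub_zero] at h2
      apply h2.congr
      intro n
      rw [Finset.mul_sum, ← Finset.sum_sub_distrib, Finset.sum_insert ha]
      have : c a * lam a ^ (n + 1) - lam a * (c a * lam a ^ n) = 0 := by ring
      rw [this, zero_add]
      apply Finset.sum_congr rfl
      intro i _
      ring
    have hs0 : ∀ i ∈ s, c i = 0 := by
      intro i hi
      have := ih (fun i => c i * (lam i - lam a))
        (fun i hi => hnorm i (Finset.mem_insert_of_mem hi))
        (fun i hi j hj hij => hdist i (Finset.mem_insert_of_mem hi) j (Finset.mem_insert_of_mem hj) hij)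
        hT i hi
      rcases mul_eq_zero.mp this with h0 | h0
      · exact h0
      · exfalso
        have : i = a := hdist i (Finset.mem_insert_of_mem hi) a (Finset.mem_insert_self a s)
          (sub_eq_zero.mp h0)
        exact ha (this ▸ hi)
    have hca : c a = 0 := by
      have hconst : Tendsto (fun n => c a * lam a ^ n) atTop (nhds 0) := by
        apply h.congr
        intro n
        rw [Finset.sum_insert ha]
        rw [Finset.sum_eq_zero (fun i hi => by rw [hs0 i hi, zero_mul]), add_zero]
      have hnrm : ∀ n, ‖c a * lam a ^ n‖ = ‖c a‖ := by
        intro n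
        rw [norm_mul, norm_pow, hnorm a (Finset.mem_insert_self a s), one_pow, mul_one]
      have h1 : Tendsto (fun n : ℕ => ‖c a‖) atTop (nhds 0) := by
        have := hconst.norm
        simpa [hnrm, hnorm a (Finset.mem_insert_self a s)] using this
      have := tendsto_nhds_unique h1 tendsto_const_nhds
      exact norm_eq_zero.mp this.symm
    intro i hi
    rcases Finset.mem_insert.mp hi with rfl | hi
    · exact hca
    · exact hs0 i hi


private lemma tendsto_aux_frac (a b : ℝ) : Tendsto (fun n : ℕ => ((n : ℝ) + a) / ((n : ℝ) + b)) atTop (nhds 1) := by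
  have hden : Tendsto (fun n : ℕ => (n : ℝ) + b) atTop atTop :=
    tendsto_atTop_add_const_right atTop b tendsto_natCast_atTop_atTop
  have h0 : Tendsto (fun n : ℕ => (b - a) / ((n : ℝ) + b)) atTop (nhds 0) :=
    Tendsto.div_atTop tendsto_const_nhds hden
  have h1 := (tendsto_const_nhds (x := (1:ℝ)) (f := atTop)).sub h0
  rw [sub_zero] at h1
  apply h1.congr'
  filter_upwards [hden.eventually_gt_atTop 0] with n hn
  field_simp
  ring

private lemma choose_ratio_succ_tendsto (k : ℕ) :
    Tendsto (fun n : ℕ => ((n + k).choose k : ℝ) / (((n + 1) + k).choose k : ℝ)) atTop (nhds 1) := by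
  have heq : ∀ n : ℕ, ((n + k).choose k : ℝ) / (((n + 1) + k).choose k : ℝ)
      = ((n : ℝ) + 1) / ((n : ℝ) + (k + 1)) := by
    intro n
    have hid : (n + k).choose k * (n + k + 1) = (n + k + 1).choose k * (n + 1) := by
      have := Nat.choose_mul_succ_eq (n + k) k
      rw [show n + k + 1 - k = n + 1 by omega] at this
      exact this
    have h1 : (0 : ℝ) < ((n + 1 + k).choose k : ℝ) := by
      exact_mod_cast Nat.choose_pos (by omega)
    have h2 : (0 : ℝ) < (n : ℝ) + (k + 1) := by positivity
    rw [div_eq_div_iff h1.ne' h2.ne']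
    have : ((n + k).choose k : ℝ) * ((n : ℝ) + k + 1) = ((n + k + 1).choose k : ℝ) * ((n : ℝ) + 1) := by
      exact_mod_cast congrArg (Nat.cast : ℕ → ℝ) hid
    rw [show n + 1 + k = n + k + 1 by omega]
    calc ((n + k).choose k : ℝ) * ((n : ℝ) + (k + 1))
        = ((n + k).choose k : ℝ) * ((n : ℝ) + k + 1) := by ring
      _ = ((n + k + 1).choose k : ℝ) * ((n : ℝ) + 1) := this
      _ = ((n : ℝ) + 1) * ((n + k + 1).choose k : ℝ) := by ring
  rw [show (1:ℝ) = 1 from rfl]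
  have := tendsto_aux_frac 1 (k + 1)
  exact this.congr (fun n => (heq n).symm)

private lemma choose_diag_mono (n : ℕ) : ∀ {a b : ℕ}, a ≤ b → (n + a).choose a ≤ (n + b).choose b := by
  intro a b hab
  induction b, hab using Nat.le_induction with
  | base => exact le_refl _
  | succ b hab ih =>
    calc (n + a).choose a ≤ (n + b).choose b := ih
      _ ≤ (n + (b + 1)).choose (b + 1) := by
          rw [show n + (b + 1) = (n + b) + 1 by omega, Nat.choose_succ_succ]
          omega

private lemma choose_ratio_lt_tendsto {m k : ℕ} (hmk : m < k) :
    Tendsto (fun n : ℕ => ((n + m).choose m : ℝ) / ((n + k).choose k : ℝ)) atTop (nhds 0) := by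
  obtain ⟨K, rfl⟩ : ∃ K, k = K + 1 := ⟨k - 1, by omega⟩
  have hbound : ∀ n : ℕ, ((n + m).choose m : ℝ) / ((n + (K + 1)).choose (K + 1) : ℝ)
      ≤ ((K : ℝ) + 1) / ((n : ℝ) + (K + 1)) := by
    intro n
    have hpos : (0 : ℝ) < ((n + (K + 1)).choose (K + 1) : ℝ) := by
      exact_mod_cast Nat.choose_pos (by omega)
    have hid : (n + K + 1) * (n + K).choose K = (n + K + 1).choose (K + 1) * (K + 1) := by
      have := Nat.add_one_mul_choose_eq (n + K) K
      simpa [Nat.succ_eq_add_one] using this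
    have hmono : ((n + m).choose m : ℝ) ≤ ((n + K).choose K : ℝ) := by
      exact_mod_cast choose_diag_mono n (by omega : m ≤ K)
    have heq : ((n + K).choose K : ℝ) / ((n + (K + 1)).choose (K + 1) : ℝ)
        = ((K : ℝ) + 1) / ((n : ℝ) + (K + 1)) := by
      have h2 : (0 : ℝ) < (n : ℝ) + (K + 1) := by positivity
      rw [div_eq_div_iff hpos.ne' h2.ne']
      have : ((n + K).choose K : ℝ) * ((n : ℝ) + K + 1) = ((n + K + 1).choose (K + 1) : ℝ) * ((K : ℝ) + 1) := by
        exact_mod_cast congrArg (Nat.cast : ℕ → ℝ)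
          (show (n + K).choose K * (n + K + 1) = (n + K + 1).choose (K + 1) * (K + 1) by
            rw [mul_comm]; exact hid)
      rw [show n + (K + 1) = n + K + 1 by omega]
      calc ((n + K).choose K : ℝ) * ((n : ℝ) + (K + 1)) = ((n + K).choose K : ℝ) * ((n : ℝ) + K + 1) := by ring
        _ = ((n + K + 1).choose (K + 1) : ℝ) * ((K : ℝ) + 1) := this
        _ = ((K : ℝ) + 1) * ((n + K + 1).choose (K + 1) : ℝ) := by ring
    calc ((n + m).choose m : ℝ) / ((n + (K + 1)).choose (K + 1) : ℝ)
        ≤ ((n + K).choose K : ℝ) / ((n + (K + 1)).choose (K + 1) : ℝ) := by gcongr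
      _ = ((K : ℝ) + 1) / ((n : ℝ) + (K + 1)) := heq
  have hlim : Tendsto (fun n : ℕ => ((K : ℝ) + 1) / ((n : ℝ) + (K + 1))) atTop (nhds 0) := by
    apply Tendsto.div_atTop tendsto_const_nhds
    exact tendsto_atTop_add_const_right atTop _ tendsto_natCast_atTop_atTop
  apply squeeze_zero (fun n => by positivity) hbound hlim


private lemma coeff_eq_zero_of_hasSum_zero {a : ℕ → ℂ}
    (h : ∀ z : ℂ, ‖z‖ < 1 → HasSum (fun n => a n * z ^ n) 0) : ∀ n, a n = 0 := by
  set p : FormalMultilinearSeries ℂ ℂ ℂ :=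
    fun n => a n • ContinuousMultilinearMap.mkPiAlgebraFin ℂ n ℂ with hp
  have happ : ∀ (n : ℕ) (z : ℂ), (p n fun _ => z) = a n * z ^ n := by
    intro n z
    simp [hp, ContinuousMultilinearMap.mkPiAlgebraFin_apply, List.ofFn_const,
      List.prod_replicate, smul_eq_mul]
  have hnormp : ∀ n, ‖p n‖ ≤ ‖a n‖ := by
    intro n
    rw [hp]
    calc ‖a n • ContinuousMultilinearMap.mkPiAlgebraFin ℂ n ℂ‖
        ≤ ‖a n‖ * ‖ContinuousMultilinearMap.mkPiAlgebraFin ℂ n ℂ‖ :=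
          ContinuousMultilinearMap.opNorm_smul_le _ _
      _ = ‖a n‖ * 1 := by rw [ContinuousMultilinearMap.norm_mkPiAlgebraFin]
      _ = ‖a n‖ := mul_one _
  have hrad : 1 ≤ p.radius := by
    apply ENNReal.le_of_forall_nnreal_lt
    intro r hr
    have hr1 : (r : ℝ) < 1 := by exact_mod_cast hr
    have hrc : ‖((r : ℝ) : ℂ)‖ < 1 := by
      rw [Complex.norm_real, Real.norm_eq_abs, abs_of_nonneg r.coe_nonneg]; exact hr1
    have hsum := (h _ hrc).summable
    have htend : Tendsto (fun n => ‖a n * ((r : ℝ) : ℂ) ^ n‖) atTop (nhds 0) := by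
      simpa using hsum.tendsto_atTop_zero.norm
    have hbdd : BddAbove (Set.range fun n => ‖a n * ((r : ℝ) : ℂ) ^ n‖) :=
      htend.bddAbove_range
    obtain ⟨C, hC⟩ := hbdd
    apply p.le_radius_of_bound C
    intro n
    calc ‖p n‖ * (r : ℝ) ^ n ≤ ‖a n‖ * (r : ℝ) ^ n := by
          apply mul_le_mul_of_nonneg_right (hnormp n) (by positivity)
      _ = ‖a n * ((r : ℝ) : ℂ) ^ n‖ := by
          rw [norm_mul, norm_pow, Complex.norm_real, Real.norm_eq_abs,
            abs_of_nonneg r.coe_nonneg]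
      _ ≤ C := hC ⟨n, rfl⟩
  have hball : HasFPowerSeriesOnBall (fun _ : ℂ => (0 : ℂ)) p 0 1 :=
    { r_le := hrad
      r_pos := one_pos
      hasSum := by
        intro y hy
        rw [mem_emetric_ball_zero_iff] at hy
        have hy1 : ‖y‖ < 1 := by rw [← coe_nnnorm]; rw [enorm_eq_nnnorm] at hy; exact_mod_cast hy
        have := h y hy1
        simp only [happ]
        simpa using this }
  have hzero : p = 0 := HasFPowerSeriesAt.eq_zero hball.hasFPowerSeriesAt
  intro n
  have := happ n 1
  rw [hzero] at this
  simpa using this.symm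


/-- If `P = ∑ γ_n tⁿ` is meromorphic on a neighbourhood of the closed unit disc with
    all poles `x i` (of order `d i`) on the unit circle, is tame and simply
    accumulating with `γ_{n-1}/γ_n → 1`, then the unique pole of maximal order is at
    `t = 1` (i.e. `Δ_P^{top}(t) = t − 1`). -/
theorem top_pole_at_one (γ : ℕ → ℂ) (N₀ : ℕ) (hne : ∀ n ≥ N₀, γ n ≠ 0)
    (hratio : Tendsto (fun n => γ (n - 1) / γ n) atTop (nhds 1))
    (Npoles : ℕ) (x : Fin Npoles → ℂ) (hx : ∀ i, ‖x i‖ = 1) (hinj : Function.Injective x)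
    (d : Fin Npoles → ℕ) (hd : ∀ i, 1 ≤ d i)
    (c : Fin Npoles → ℕ → ℂ) (hc : ∀ i, c i (d i) ≠ 0)
    (Q : ℂ → ℂ) (ρ : ℝ) (hρ : 1 < ρ) (hQ : DifferentiableOn ℂ Q (Metric.ball 0 ρ))
    (hrep : ∀ z : ℂ, ‖z‖ < 1 →
      HasSum (fun n => γ n * z ^ n)
        ((∑ i, ∑ j ∈ Finset.Icc 1 (d i), c i j / (z - x i) ^ j) + Q z)) :
    (∀ i, (∀ j, d j ≤ d i) → x i = 1) ∧ (∃ i, (∀ j, d j ≤ d i) ∧ x i = 1) := by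
  classical
  have hRpos : (0:ℝ) ≤ (1 + ρ) / 2 := by linarith
  set R : NNReal := ⟨(1 + ρ) / 2, hRpos⟩ with hRdef
  have hRcoe : (R : ℝ) = (1 + ρ) / 2 := rfl
  have hR1 : (1:ℝ) < (R : ℝ) := by rw [hRcoe]; linarith
  have hRρ : (R : ℝ) < ρ := by rw [hRcoe]; linarith
  have hQR : DifferentiableOn ℂ Q (Metric.closedBall 0 (R:ℝ)) :=
    hQ.mono (Metric.closedBall_subset_ball hRρ)
  have hRpos' : 0 < R := by
    rw [← NNReal.coe_lt_coe]; push_cast; linarith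
  obtain ⟨p, hball⟩ : ∃ p, HasFPowerSeriesOnBall Q p 0 R :=
    ⟨_, hQR.hasFPowerSeriesOnBall hRpos'⟩
  set q : ℕ → ℂ := fun n => p.coeff n with hqdef
  have hrad1 : (1 : ENNReal) < p.radius := by
    refine lt_of_lt_of_le ?_ hball.r_le
    exact_mod_cast hR1
  have hq0 : Tendsto q atTop (nhds 0) := by
    have hlo := p.isLittleO_one_of_lt_radius (r := 1) (by simpa using hrad1)
    rw [Asymptotics.isLittleO_one_iff] at hlo
    have hlo' : Tendsto (fun n => ‖p n‖) atTop (nhds 0) := by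
      apply hlo.congr
      intro n; push_cast; rw [one_pow, mul_one]
    apply tendsto_zero_iff_norm_tendsto_zero.mpr
    apply hlo'.congr
    intro n
    rw [p.norm_apply_eq_norm_coef]
  have hQsum : ∀ z : ℂ, ‖z‖ < 1 → HasSum (fun n => q n * z ^ n) (Q z) := by
    intro z hz
    have hmem : z ∈ Metric.eball (0:ℂ) R := by
      rw [mem_emetric_ball_zero_iff, enorm_eq_nnnorm]
      have := hz.trans hR1; rw [← coe_nnnorm] at this; exact_mod_cast this
    have hs := hball.hasSum hmem
    rw [zero_add] at hs
    have heq : (fun n => (p n) fun _ => z) = fun n => q n * z ^ n := by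
      funext n
      rw [p.apply_eq_pow_smul_coeff, smul_eq_mul, mul_comm]
    exact heq ▸ hs
  have hxne : ∀ i, x i ≠ 0 := by
    intro i h
    have h1 := hx i
    rw [h, norm_zero] at h1
    norm_num at h1
  set δ : ℕ → ℂ := fun n =>
    (∑ i, ∑ j ∈ Finset.Icc 1 (d i),
      c i j * (-(x i))⁻¹ ^ j * (((n + (j - 1)).choose (j - 1) : ℂ)) * (x i)⁻¹ ^ n) + q n
    with hδdef
  have hδsum : ∀ z : ℂ, ‖z‖ < 1 → HasSum (fun n => δ n * z ^ n)
      ((∑ i, ∑ j ∈ Finset.Icc 1 (d i), c i j / (z - x i) ^ j) + Q z) := by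
    intro z hz
    have hterm : ∀ i : Fin Npoles, ∀ j ∈ Finset.Icc 1 (d i),
        HasSum (fun n => c i j * (-(x i))⁻¹ ^ j * (((n + (j - 1)).choose (j - 1) : ℂ))
          * (x i)⁻¹ ^ n * z ^ n) (c i j / (z - x i) ^ j) := by
      intro i j hj
      obtain ⟨hj1, hj2⟩ := Finset.mem_Icc.mp hj
      have hzx : ‖z * (x i)⁻¹‖ < 1 := by
        rw [norm_mul, norm_inv, hx i, inv_one, mul_one]; exact hz
      have h1 := hasSum_choose_mul_geometric_of_norm_lt_one (𝕜 := ℂ) (j - 1) hzx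
      have h2 := h1.mul_left (c i j * (-(x i))⁻¹ ^ j)
      have hj1' : j - 1 + 1 = j := by omega
      rw [hj1'] at h2
      have hxz : x i - z ≠ 0 := by
        rw [sub_ne_zero]
        intro h
        rw [← h, hx i] at hz
        exact lt_irrefl 1 hz
      have hfac : (1 : ℂ) - z * (x i)⁻¹ = (x i - z) * (x i)⁻¹ := by
        rw [sub_mul, mul_inv_cancel₀ (hxne i)]
      have hkey : z - x i = (-(x i)) * (1 - z * (x i)⁻¹) := by
        rw [hfac, show (-(x i)) * ((x i - z) * (x i)⁻¹) = -((x i * (x i)⁻¹) * (x i - z)) by ring,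
          mul_inv_cancel₀ (hxne i)]
        ring
      have hBne : (1 : ℂ) - z * (x i)⁻¹ ≠ 0 := by
        rw [hfac]
        exact mul_ne_zero hxz (inv_ne_zero (hxne i))
      have hval : c i j * (-(x i))⁻¹ ^ j * (1 / (1 - z * (x i)⁻¹) ^ j)
          = c i j / (z - x i) ^ j := by
        rw [hkey, mul_pow]
        have hnx : (-(x i)) ≠ 0 := neg_ne_zero.mpr (hxne i)
        field_simp
        rw [mul_assoc (c i j), ← mul_pow, show (-(1 / x i)) * (-x i) = 1 by rw [neg_mul_neg, one_div, inv_mul_cancel₀ (hxne i)], one_pow, mul_one]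
      rw [hval] at h2
      have heq2 : (fun n => c i j * (-(x i))⁻¹ ^ j * ((((n + (j - 1)).choose (j - 1) : ℕ) : ℂ) * (z * (x i)⁻¹) ^ n))
          = fun n => c i j * (-(x i))⁻¹ ^ j * (((n + (j - 1)).choose (j - 1) : ℕ) : ℂ) * (x i)⁻¹ ^ n * z ^ n := by
        funext n
        rw [mul_pow]
        ring
      rw [heq2] at h2
      exact h2
    have hsumi : ∀ i : Fin Npoles,
        HasSum (fun n => ∑ j ∈ Finset.Icc 1 (d i), c i j * (-(x i))⁻¹ ^ j
            * (((n + (j - 1)).choose (j - 1) : ℂ)) * (x i)⁻¹ ^ n * z ^ n)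
          (∑ j ∈ Finset.Icc 1 (d i), c i j / (z - x i) ^ j) :=
      fun i => hasSum_sum (hterm i)
    have hsumall : HasSum (fun n => ∑ i, ∑ j ∈ Finset.Icc 1 (d i), c i j * (-(x i))⁻¹ ^ j
            * (((n + (j - 1)).choose (j - 1) : ℂ)) * (x i)⁻¹ ^ n * z ^ n)
          (∑ i, ∑ j ∈ Finset.Icc 1 (d i), c i j / (z - x i) ^ j) :=
      hasSum_sum (fun i _ => hsumi i)
    have htot := hsumall.add (hQsum z hz)
    have heq3 : (fun n => (∑ i, ∑ j ∈ Finset.Icc 1 (d i), c i j * (-(x i))⁻¹ ^ j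
          * (((n + (j - 1)).choose (j - 1) : ℕ) : ℂ) * (x i)⁻¹ ^ n * z ^ n) + q n * z ^ n)
        = fun n => δ n * z ^ n := by
      funext n
      rw [hδdef]
      simp only [add_mul, Finset.sum_mul]
    rw [heq3] at htot
    exact htot
  have hγδ : ∀ n, γ n = δ n := by
    have h0 : ∀ z : ℂ, ‖z‖ < 1 → HasSum (fun n => (γ n - δ n) * z ^ n) 0 := by
      intro z hz
      have hsub := (hrep z hz).sub (hδsum z hz)
      rw [sub_self] at hsub
      have heq4 : (fun n => γ n * z ^ n - δ n * z ^ n) = fun n => (γ n - δ n) * z ^ n := by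
        funext n
        rw [sub_mul]
      rw [heq4] at hsub
      exact hsub
    intro n
    exact sub_eq_zero.mp (coeff_eq_zero_of_hasSum_zero h0 n)
  have hNpos : 0 < Npoles := by
    by_contra hN
    have hN0 : Npoles = 0 := by omega
    subst hN0
    have hγq : ∀ n, γ n = q n := by
      intro n
      rw [hγδ n, hδdef]
      simp
    set r : NNReal := ⟨(3 + ρ) / 4, by linarith⟩ with hrdef
    have hrcoe : (r : ℝ) = (3 + ρ) / 4 := rfl
    have hr1 : (1:ℝ) < (r : ℝ) := by rw [hrcoe]; linarith
    have hrR : (r : ENNReal) < p.radius := by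
      refine lt_of_lt_of_le ?_ hball.r_le
      rw [ENNReal.coe_lt_coe, ← NNReal.coe_lt_coe]
      rw [hrcoe, hRcoe]
      linarith
    have hlo := p.isLittleO_one_of_lt_radius hrR
    rw [Asymptotics.isLittleO_one_iff] at hlo
    have hu : Tendsto (fun n => ‖γ n‖ * (r:ℝ) ^ n) atTop (nhds 0) := by
      apply hlo.congr
      intro n
      rw [p.norm_apply_eq_norm_coef, hγq n]
    have hrat1 : Tendsto (fun n => γ n / γ (n + 1)) atTop (nhds 1) := by
      have := hratio.comp (tendsto_add_atTop_nat 1)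
      simpa [Function.comp_def] using this
    have hnrm : Tendsto (fun n => ‖γ n / γ (n + 1)‖) atTop (nhds 1) := by
      simpa using hrat1.norm
    have hev : ∀ᶠ n in atTop, ‖γ n / γ (n + 1)‖ < (r : ℝ) := hnrm.eventually_lt_const hr1
    obtain ⟨N, hNprop⟩ := eventually_atTop.mp (hev.and (eventually_ge_atTop N₀))
    have hstep : ∀ n ≥ N, ‖γ n‖ * (r:ℝ) ^ n < ‖γ (n + 1)‖ * (r:ℝ) ^ (n + 1) := by
      intro n hn
      obtain ⟨hlt, hge⟩ := hNprop n hn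
      have hγn1 : γ (n + 1) ≠ 0 := hne _ (by omega)
      have hnorm_pos : 0 < ‖γ (n + 1)‖ := norm_pos_iff.mpr hγn1
      rw [norm_div, div_lt_iff₀ hnorm_pos] at hlt
      calc ‖γ n‖ * (r:ℝ) ^ n < ((r:ℝ) * ‖γ (n + 1)‖) * (r:ℝ) ^ n :=
            mul_lt_mul_of_pos_right hlt (by positivity)
        _ = ‖γ (n + 1)‖ * (r:ℝ) ^ (n + 1) := by rw [pow_succ]; ring
    have hmono : ∀ m, ‖γ N‖ * (r:ℝ) ^ N ≤ ‖γ (N + m)‖ * (r:ℝ) ^ (N + m) := by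
      intro m
      induction m with
      | zero => simp
      | succ m ih => exact ih.trans (le_of_lt (hstep (N + m) (by omega)))
    have huNpos : 0 < ‖γ N‖ * (r:ℝ) ^ N := by
      have hγN : γ N ≠ 0 := hne _ (hNprop N le_rfl).2
      have := norm_pos_iff.mpr hγN
      positivity
    obtain ⟨M, hM⟩ := eventually_atTop.mp (hu.eventually_lt_const huNpos)
    have h1 := hmono M
    have h2 := hM (N + M) (by omega)
    linarith
  have hnefin : Nonempty (Fin Npoles) := ⟨⟨0, hNpos⟩⟩
  obtain ⟨i₀, hi₀⟩ := Finite.exists_max d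
  set D := d i₀ with hDdef
  have hD1 : 1 ≤ D := hd i₀
  set K := D - 1 with hKdef
  have hDK : D = K + 1 := by omega
  set lam : Fin Npoles → ℂ := fun i => (x i)⁻¹ with hlamdef
  have hlam_norm : ∀ i, ‖lam i‖ = 1 := fun i => by
    rw [hlamdef]; rw [norm_inv, hx i, inv_one]
  have hlam_inj : Function.Injective lam := by
    intro i j h
    apply hinj
    rw [hlamdef] at h
    exact inv_injective h
  set T : Finset (Fin Npoles) := Finset.univ.filter (fun i => d i = D) with hTdef
  set b : Fin Npoles → ℂ := fun i => c i D * (-(x i))⁻¹ ^ D with hbdef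
  set CnC : ℕ → ℂ := fun n => (((n + K).choose K : ℕ) : ℂ) with hCdef
  have hCne : ∀ n, CnC n ≠ 0 := by
    intro n
    show (((n + K).choose K : ℕ) : ℂ) ≠ 0
    exact_mod_cast (Nat.choose_pos (by omega : K ≤ n + K)).ne'
  have hC1le : ∀ n, (1:ℝ) ≤ ‖CnC n‖ := by
    intro n
    show (1:ℝ) ≤ ‖(((n + K).choose K : ℕ) : ℂ)‖
    rw [Complex.norm_natCast]
    exact_mod_cast Nat.choose_pos (by omega : K ≤ n + K)
  set w : ℕ → ℂ := fun n => γ n / CnC n with hwdef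
  set S : ℕ → ℂ := fun n => ∑ i ∈ T, b i * lam i ^ n with hSdef
  -- Claim A
  have hterm_top : ∀ i, d i = D → ∀ n : ℕ,
      c i D * (-(x i))⁻¹ ^ D * (((n + (D - 1)).choose (D - 1) : ℕ) : ℂ) * (x i)⁻¹ ^ n / CnC n
        = b i * lam i ^ n := by
    intro i hdi n
    rw [div_eq_iff (hCne n), hbdef, hlamdef, hCdef, show D - 1 = K from rfl]
    ring
  have hdecomp : ∀ n, w n - S n =
      (∑ i, ∑ j ∈ Finset.Icc 1 (d i),
        (if d i = D ∧ j = D then 0 else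
          c i j * (-(x i))⁻¹ ^ j * (((n + (j - 1)).choose (j - 1) : ℕ) : ℂ) * (x i)⁻¹ ^ n / CnC n))
        + q n / CnC n := by
    intro n
    have hwn : w n = (∑ i, ∑ j ∈ Finset.Icc 1 (d i),
        c i j * (-(x i))⁻¹ ^ j * (((n + (j - 1)).choose (j - 1) : ℕ) : ℂ) * (x i)⁻¹ ^ n / CnC n)
        + q n / CnC n := by
      show γ n / CnC n = _
      rw [hγδ n]
      simp only [hδdef]
      rw [add_div, Finset.sum_div]
      congr 1
      apply Finset.sum_congr rfl
      intro i _
      rw [Finset.sum_div]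
    rw [hwn]
    have hsplit : ∀ i : Fin Npoles, ∑ j ∈ Finset.Icc 1 (d i),
        c i j * (-(x i))⁻¹ ^ j * (((n + (j - 1)).choose (j - 1) : ℕ) : ℂ) * (x i)⁻¹ ^ n / CnC n
        = (∑ j ∈ Finset.Icc 1 (d i),
            (if d i = D ∧ j = D then 0 else
              c i j * (-(x i))⁻¹ ^ j * (((n + (j - 1)).choose (j - 1) : ℕ) : ℂ) * (x i)⁻¹ ^ n / CnC n))
          + (if d i = D then b i * lam i ^ n else 0) := by
      intro i
      by_cases hdi : d i = D
      · rw [if_pos hdi]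
        have h1 : ∀ j ∈ Finset.Icc 1 (d i),
            c i j * (-(x i))⁻¹ ^ j * (((n + (j - 1)).choose (j - 1) : ℕ) : ℂ) * (x i)⁻¹ ^ n / CnC n
            = (if d i = D ∧ j = D then 0 else
                c i j * (-(x i))⁻¹ ^ j * (((n + (j - 1)).choose (j - 1) : ℕ) : ℂ) * (x i)⁻¹ ^ n / CnC n)
              + (if j = D then
                  c i j * (-(x i))⁻¹ ^ j * (((n + (j - 1)).choose (j - 1) : ℕ) : ℂ) * (x i)⁻¹ ^ n / CnC n
                else 0) := by
          intro j _
          by_cases hj : j = D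
          · simp [hj, hdi]
          · simp [hj, hdi]
        rw [Finset.sum_congr rfl h1, Finset.sum_add_distrib]
        congr 1
        rw [Finset.sum_ite_eq' (Finset.Icc 1 (d i)) D
          (fun j => c i j * (-(x i))⁻¹ ^ j * (((n + (j - 1)).choose (j - 1) : ℕ) : ℂ) * (x i)⁻¹ ^ n / CnC n)]
        rw [if_pos (Finset.mem_Icc.mpr ⟨hD1, by omega⟩)]
        rw [← hdi] at hterm_top ⊢
        exact hterm_top i rfl n
      · rw [if_neg hdi, add_zero]
        apply Finset.sum_congr rfl
        intro j _
        rw [if_neg (by tauto)]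
    calc (∑ i, ∑ j ∈ Finset.Icc 1 (d i),
        c i j * (-(x i))⁻¹ ^ j * (((n + (j - 1)).choose (j - 1) : ℕ) : ℂ) * (x i)⁻¹ ^ n / CnC n)
        + q n / CnC n - S n
        = (∑ i, ((∑ j ∈ Finset.Icc 1 (d i),
            (if d i = D ∧ j = D then 0 else
              c i j * (-(x i))⁻¹ ^ j * (((n + (j - 1)).choose (j - 1) : ℕ) : ℂ) * (x i)⁻¹ ^ n / CnC n))
          + (if d i = D then b i * lam i ^ n else 0))) + q n / CnC n - S n := by
          rw [Finset.sum_congr rfl (fun i _ => hsplit i)]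
      _ = _ := by
          rw [Finset.sum_add_distrib]
          have hS2 : S n = ∑ i, (if d i = D then b i * lam i ^ n else 0) := by
            simp only [hSdef, hTdef]
            rw [Finset.sum_filter]
          rw [← hS2]
          ring
  have hlower : ∀ i : Fin Npoles, ∀ j ∈ Finset.Icc 1 (d i), ¬(d i = D ∧ j = D) →
      Tendsto (fun n => c i j * (-(x i))⁻¹ ^ j * (((n + (j - 1)).choose (j - 1) : ℕ) : ℂ)
        * (x i)⁻¹ ^ n / CnC n) atTop (nhds 0) := by
    intro i j hj hnot
    obtain ⟨hj1, hj2⟩ := Finset.mem_Icc.mp hj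
    have hdiD : d i ≤ D := hi₀ i
    have hjK : j - 1 < K := by
      by_cases hjD : j = D
      · exfalso; exact hnot ⟨by omega, hjD⟩
      · omega
    have hr0 := choose_ratio_lt_tendsto hjK
    apply tendsto_zero_iff_norm_tendsto_zero.mpr
    have heqn : ∀ n : ℕ, ‖c i j * (-(x i))⁻¹ ^ j * (((n + (j - 1)).choose (j - 1) : ℕ) : ℂ)
        * (x i)⁻¹ ^ n / CnC n‖
        = ‖c i j * (-(x i))⁻¹ ^ j‖ * ((((n + (j - 1)).choose (j - 1) : ℕ) : ℝ) / (((n + K).choose K : ℕ) : ℝ)) := by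
      intro n
      rw [norm_div, norm_mul, norm_mul, norm_pow, norm_inv, hx i, inv_one, one_pow, mul_one,
        hCdef, Complex.norm_natCast, Complex.norm_natCast, mul_div_assoc]
    have := hr0.const_mul (‖c i j * (-(x i))⁻¹ ^ j‖)
    rw [mul_zero] at this
    apply this.congr
    intro n
    exact (heqn n).symm
  have hqC : Tendsto (fun n => q n / CnC n) atTop (nhds 0) := by
    apply tendsto_zero_iff_norm_tendsto_zero.mpr
    apply squeeze_zero (fun n => norm_nonneg _) (fun n => ?_)
      (tendsto_zero_iff_norm_tendsto_zero.mp hq0)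
    rw [norm_div]
    exact div_le_self (norm_nonneg _) (hC1le n)
  have hA : Tendsto (fun n => w n - S n) atTop (nhds 0) := by
    have hsum0 : Tendsto (fun n => (∑ i, ∑ j ∈ Finset.Icc 1 (d i),
        (if d i = D ∧ j = D then 0 else
          c i j * (-(x i))⁻¹ ^ j * (((n + (j - 1)).choose (j - 1) : ℕ) : ℂ) * (x i)⁻¹ ^ n / CnC n)))
        atTop (nhds 0) := by
      have h0 : Tendsto (fun n => (∑ i : Fin Npoles, ∑ j ∈ Finset.Icc 1 (d i),
          (if d i = D ∧ j = D then 0 else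
            c i j * (-(x i))⁻¹ ^ j * (((n + (j - 1)).choose (j - 1) : ℕ) : ℂ) * (x i)⁻¹ ^ n / CnC n)))
          atTop (nhds (∑ i : Fin Npoles, ∑ j ∈ Finset.Icc 1 (d i), (0:ℂ))) := by
        apply tendsto_finset_sum
        intro i _
        apply tendsto_finset_sum
        intro j hj
        by_cases hcond : d i = D ∧ j = D
        · simp only [if_pos hcond]
          exact tendsto_const_nhds
        · have := hlower i j hj hcond
          apply this.congr
          intro n
          rw [if_neg hcond]
      simpa using h0
    have := hsum0.add hqC
    rw [add_zero] at this
    apply this.congr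
    intro n
    exact (hdecomp n).symm
  -- boundedness of w
  have hSbound : ∀ n, ‖S n‖ ≤ ∑ i ∈ T, ‖b i‖ := by
    intro n
    calc ‖S n‖ ≤ ∑ i ∈ T, ‖b i * lam i ^ n‖ := norm_sum_le _ _
      _ = ∑ i ∈ T, ‖b i‖ := by
          apply Finset.sum_congr rfl
          intro i _
          rw [norm_mul, norm_pow, hlam_norm i, one_pow, mul_one]
  have hwO : (fun n => w n) =O[atTop] (fun _ : ℕ => (1:ℝ)) := by
    have h1 : (fun n => S n) =O[atTop] (fun _ : ℕ => (1:ℝ)) := by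
      apply Asymptotics.IsBigO.of_bound (∑ i ∈ T, ‖b i‖)
      filter_upwards with n
      rw [norm_one, mul_one]
      exact hSbound n
    have h2 : (fun n => w n - S n) =O[atTop] (fun _ : ℕ => (1:ℝ)) :=
      hA.isBigO_one ℝ
    have := h2.add h1
    apply this.congr_left
    intro n
    ring
  -- Claim B
  have hrat1 : Tendsto (fun n => γ n / γ (n + 1)) atTop (nhds 1) := by
    have := hratio.comp (tendsto_add_atTop_nat 1)
    simpa [Function.comp_def] using this
  have hcrC : Tendsto (fun n => CnC n / CnC (n + 1)) atTop (nhds 1) := by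
    have hreal := choose_ratio_succ_tendsto K
    have hcomp := (Complex.continuous_ofReal.tendsto (1:ℝ)).comp hreal
    have : Tendsto (fun n => (((((n + K).choose K : ℕ) : ℝ) / (((n + 1 + K).choose K : ℕ) : ℝ) : ℝ) : ℂ))
        atTop (nhds ((1:ℝ):ℂ)) := hcomp
    rw [Complex.ofReal_one] at this
    apply this.congr
    intro n
    show ((((((n + K).choose K : ℕ) : ℝ)) / ((((n + 1 + K).choose K : ℕ)) : ℝ) : ℝ) : ℂ)
      = CnC n / CnC (n + 1)
    push_cast
    rfl
  have hcrC' : Tendsto (fun n => CnC (n + 1) / CnC n) atTop (nhds 1) := by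
    have := hcrC.inv₀ one_ne_zero
    rw [inv_one] at this
    apply this.congr
    intro n
    rw [inv_div]
  have hprod : Tendsto (fun n => (γ n / γ (n + 1)) * (CnC (n + 1) / CnC n) - 1) atTop (nhds 0) := by
    have h1 := hrat1.mul hcrC'
    rw [mul_one] at h1
    have := h1.sub_const 1
    rw [sub_self] at this
    exact this
  have hB : Tendsto (fun n => w n - w (n + 1)) atTop (nhds 0) := by
    have hev : (fun n => w (n + 1) * ((γ n / γ (n + 1)) * (CnC (n + 1) / CnC n) - 1))
        =ᶠ[atTop] (fun n => w n - w (n + 1)) := by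
      filter_upwards [eventually_ge_atTop N₀] with n hn
      have h1 : γ (n + 1) ≠ 0 := hne _ (by omega)
      show w (n + 1) * ((γ n / γ (n + 1)) * (CnC (n + 1) / CnC n) - 1) = w n - w (n + 1)
      rw [hwdef]
      show (γ (n + 1) / CnC (n + 1)) * ((γ n / γ (n + 1)) * (CnC (n + 1) / CnC n) - 1)
        = γ n / CnC n - γ (n + 1) / CnC (n + 1)
      field_simp [h1, hCne n, hCne (n + 1)]
    have hwO1 : (fun n => w (n + 1)) =O[atTop] (fun _ : ℕ => (1:ℝ)) := by
      have := hwO.comp_tendsto (tendsto_add_atTop_nat 1)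
      exact this
    have hlo : (fun n => (γ n / γ (n + 1)) * (CnC (n + 1) / CnC n) - 1)
        =o[atTop] (fun _ : ℕ => (1:ℝ)) := (Asymptotics.isLittleO_one_iff ℝ).mpr hprod
    have hmul := hwO1.mul_isLittleO hlo
    rw [show (fun x : ℕ => (1:ℝ) * (1:ℝ)) = (fun _ : ℕ => (1:ℝ)) from by funext; ring] at hmul
    have htend : Tendsto (fun n => w (n + 1) * ((γ n / γ (n + 1)) * (CnC (n + 1) / CnC n) - 1))
        atTop (nhds 0) := (Asymptotics.isLittleO_one_iff ℝ).mp hmul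
    exact htend.congr' hev
  -- Claim C
  have hSd : Tendsto (fun n => ∑ i ∈ T, (b i * (1 - lam i)) * lam i ^ n) atTop (nhds 0) := by
    have h3 := (hA.neg.add hB).add (hA.comp (tendsto_add_atTop_nat 1))
    rw [neg_zero, add_zero, add_zero] at h3
    apply h3.congr
    intro n
    show -(w n - S n) + (w n - w (n + 1)) + (w (n + 1) - S (n + 1)) = _
    have hSS : S n - S (n + 1) = ∑ i ∈ T, (b i * (1 - lam i)) * lam i ^ n := by
      rw [hSdef]
      show (∑ i ∈ T, b i * lam i ^ n) - (∑ i ∈ T, b i * lam i ^ (n + 1)) = _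
      rw [← Finset.sum_sub_distrib]
      apply Finset.sum_congr rfl
      intro i _
      rw [pow_succ]
      ring
    rw [← hSS]
    ring
  have hzero := exp_sum_coeffs_eq_zero lam T (fun i => b i * (1 - lam i))
    (fun i _ => hlam_norm i) (fun i _ j _ h => hlam_inj h) hSd
  have hkey : ∀ i, d i = D → x i = 1 := by
    intro i hdi
    have hiT : i ∈ T := by
      rw [hTdef]
      simp [hdi]
    have h0 := hzero i hiT
    have hbne : b i ≠ 0 := by
      rw [hbdef]
      apply mul_ne_zero
      · rw [← hdi]; exact hc i
      · exact pow_ne_zero _ (inv_ne_zero (neg_ne_zero.mpr (hxne i)))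
    rcases mul_eq_zero.mp h0 with h | h
    · exact absurd h hbne
    · have hl1 : lam i = 1 := by
        have := sub_eq_zero.mp h
        exact this.symm
      rw [hlamdef] at hl1
      exact inv_eq_one.mp hl1
  exact ⟨fun i hi => hkey i (le_antisymm (hi₀ i) (hi i₀)), ⟨i₀, hi₀, hkey i₀ rfl⟩⟩
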